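/- Every feasible sequence (non-increasing integers f_1 ≥ ... ≥ f_n with total sum 0 and ∑_{i=1}^k f_i ≤ k(n−k) for all 1 ≤ k < n) is realizable as the imbalance sequence of a simple digraph, and conversely every imbalance sequence of a simple digraph is feasible. -/

import Mathlib

open Finset

/-- An `r`-digraph on `n` vertices: `A i j` is the number of arcs from `i` to `j`;
no loops, and at most `r` arcs (both directions counted) between any two distinct vertices. -/
def IsRDigraph (n r : ℕ) (A : Fin n → Fin n → ℕ) : Prop :=
  (∀ i, A i i = 0) ∧ ∀ i j, i ≠ j → A i j + A j i ≤ r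

/-- Imbalance of a vertex: outdegree minus indegree. -/
def imbalance {n : ℕ} (A : Fin n → Fin n → ℕ) (v : Fin n) : ℤ :=
  (∑ j, (A v j : ℤ)) - ∑ j, (A j v : ℤ)

/-- `b` lists the vertex imbalances of `A` (in some order given by a permutation). -/
def IsImbalanceSeq (n r : ℕ) (A : Fin n → Fin n → ℕ) (b : Fin n → ℤ) : Prop :=
  IsRDigraph n r A ∧ ∃ σ : Equiv.Perm (Fin n), ∀ i, b i = imbalance A (σ i)

/-- Sum of the first `k` entries of `b`. -/
def psum {n : ℕ} (b : Fin n → ℤ) (k : ℕ) : ℤ :=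
  ∑ i ∈ Finset.univ.filter (fun i : Fin n => (i : ℕ) < k), b i

/-- A non-increasing integer sequence is feasible: sums to zero and satisfies
$\sum_{i=1}^k f_i \le k(n-k)$ for all 1 ≤ k < n. -/
def Feasible (n : ℕ) (f : Fin n → ℤ) : Prop :=
  psum f n = 0 ∧ ∀ k : ℕ, 1 ≤ k → k < n → psum f k ≤ (k : ℤ) * ((n : ℤ) - k)

-- §0 prefix filter as a map
lemma filter_lt_eq_map {n k : ℕ} (hk : k ≤ n) :
    (Finset.univ.filter (fun i : Fin n => (i : ℕ) < k)) =
      Finset.map (Fin.castLEEmb hk) Finset.univ := by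
  ext i
  simp only [mem_filter, mem_univ, true_and, mem_map]
  constructor
  · intro h
    refine ⟨⟨i, h⟩, ?_⟩
    simp [Fin.castLEEmb, Fin.ext_iff]
  · rintro ⟨j, rfl⟩
    simpa [Fin.castLEEmb] using j.2

lemma psum_eq_sum {n k : ℕ} (hk : k ≤ n) (f : Fin n → ℤ) :
    psum f k = ∑ j : Fin k, f (Fin.castLE hk j) := by
  rw [psum, filter_lt_eq_map hk, Finset.sum_map]
  rfl

lemma psum_univ {n : ℕ} (f : Fin n → ℤ) : psum f n = ∑ i, f i := by
  rw [psum]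
  congr 1
  ext i
  simp [i.2]

-- §1 cut lemma
lemma imbalance_sum_cut {n} (A : Fin n → Fin n → ℕ) (S : Finset (Fin n)) :
    ∑ v ∈ S, imbalance A v = ∑ u ∈ S, ∑ v ∈ Sᶜ, ((A u v : ℤ) - A v u) := by
  have key : ∀ u, imbalance A u = ∑ v, ((A u v : ℤ) - A v u) := by
    intro u; rw [imbalance, Finset.sum_sub_distrib]
  have split : ∀ u, (∑ v, ((A u v : ℤ) - A v u)) =
      (∑ v ∈ S, ((A u v : ℤ) - A v u)) + ∑ v ∈ Sᶜ, ((A u v : ℤ) - A v u) := by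
    intro u; rw [Finset.sum_add_sum_compl]
  calc ∑ v ∈ S, imbalance A v
      = (∑ u ∈ S, ∑ v ∈ S, ((A u v : ℤ) - A v u)) +
        ∑ u ∈ S, ∑ v ∈ Sᶜ, ((A u v : ℤ) - A v u) := by
        rw [← Finset.sum_add_distrib]
        exact Finset.sum_congr rfl fun u _ => by rw [key u, split u]
    _ = ∑ u ∈ S, ∑ v ∈ Sᶜ, ((A u v : ℤ) - A v u) := by
        have : (∑ u ∈ S, ∑ v ∈ S, ((A u v : ℤ) - A v u)) = 0 := by
          have h1 : (∑ u ∈ S, ∑ v ∈ S, ((A u v : ℤ) - A v u)) =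
              (∑ u ∈ S, ∑ v ∈ S, (A u v : ℤ)) - ∑ u ∈ S, ∑ v ∈ S, (A v u : ℤ) := by
            simp [Finset.sum_sub_distrib]
          rw [h1, Finset.sum_comm (s := S) (t := S) (f := fun u v => (A v u : ℤ))]
          ring_nf
        rw [this, zero_add]

-- §2 subset sums of an antitone sequence
lemma strictMono_ge {s : ℕ} (g : Fin s → ℕ) (hg : StrictMono g) :
    ∀ j : Fin s, (j : ℕ) ≤ g j := by
  intro j
  induction' hj : (j : ℕ) with m ih generalizing j
  · exact Nat.zero_le _
  · have hm : m < s := by omega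
    have := hg (show (⟨m, hm⟩ : Fin s) < j by simp [Fin.lt_def, hj])
    have := ih ⟨m, hm⟩ rfl
    omega

lemma sum_subset_le_psum {n : ℕ} (f : Fin n → ℤ) (hf : Antitone f)
    (S : Finset (Fin n)) : ∑ i ∈ S, f i ≤ psum f S.card := by
  have hcard : S.card ≤ n := by simpa using Finset.card_le_card (Finset.subset_univ S)
  set s := S.card with hs
  have hemb := S.orderEmbOfFin (k := s) rfl
  set e := S.orderEmbOfFin (rfl : S.card = s) with he
  have hmape : Finset.map e.toEmbedding Finset.univ = S := by
    apply Finset.eq_of_subset_of_card_le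
    · intro x hx
      simp only [mem_map] at hx
      obtain ⟨j, -, rfl⟩ := hx
      exact Finset.orderEmbOfFin_mem S rfl j
    · simp
  have h1 : ∑ i ∈ S, f i = ∑ j : Fin s, f (e j) := by
    have h0 := Finset.sum_map Finset.univ e.toEmbedding f
    rw [hmape] at h0
    rw [h0]; rfl
  have h2 : psum f s = ∑ j : Fin s, f (Fin.castLE hcard j) := psum_eq_sum hcard f
  rw [h1, h2]
  apply Finset.sum_le_sum
  intro j _
  apply hf
  have : (j : ℕ) ≤ ((e j : Fin n) : ℕ) := by
    apply strictMono_ge (fun j => ((e j : Fin n) : ℕ))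
    intro a b hab
    exact e.strictMono hab
  simpa [Fin.le_def] using this

-- card of the prefix filter
lemma card_filter_lt {n k : ℕ} (hk : k ≤ n) :
    (Finset.univ.filter (fun i : Fin n => (i : ℕ) < k)).card = k := by
  rw [filter_lt_eq_map hk]; simp

-- §3 pushing one unit of imbalance across a free pair
lemma sum_ind_fst {n : ℕ} (a b : Fin n) (x : Fin n) :
    (∑ j, (if x = a ∧ j = b then (1:ℤ) else 0)) = if x = a then 1 else 0 := by
  by_cases hx : x = a <;> simp [hx]

lemma sum_ind_snd {n : ℕ} (a b : Fin n) (y : Fin n) :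
    (∑ j, (if j = a ∧ y = b then (1:ℤ) else 0)) = if y = b then 1 else 0 := by
  by_cases hy : y = b <;> simp [hy]

lemma push {n : ℕ} {A : Fin n → Fin n → ℕ} (hA : IsRDigraph n 1 A) {p v : Fin n}
    (hpv : p ≠ v) (h0 : A p v = 0) :
    ∃ B, IsRDigraph n 1 B ∧
      (∀ x y, x ≠ p → y ≠ p → B x y = A x y) ∧
      ∀ i, imbalance B i =
        imbalance A i + (if i = p then 1 else 0) - (if i = v then 1 else 0) := by
  obtain ⟨hloop, hpair⟩ := hA
  by_cases h1 : A v p = 0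
  · -- add the arc p → v
    refine ⟨fun x y => A x y + (if x = p ∧ y = v then 1 else 0), ⟨?_, ?_⟩, ?_, ?_⟩
    · intro i
      have : ¬ (i = p ∧ i = v) := by rintro ⟨rfl, rfl⟩; exact hpv rfl
      simp [hloop, this]
    · intro i j hij
      show A i j + (if i = p ∧ j = v then 1 else 0) +
        (A j i + (if j = p ∧ i = v then 1 else 0)) ≤ 1
      by_cases hip : i = p ∧ j = v
      · have e1 : (if i = p ∧ j = v then 1 else 0) = 1 := if_pos hip
        have e2 : (if j = p ∧ i = v then 1 else 0) = 0 := by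
          apply if_neg; rintro ⟨-, hi⟩; exact hpv (hip.1.symm.trans hi)
        rw [e1, e2, hip.1, hip.2, h0, h1]
      · by_cases hjp : j = p ∧ i = v
        · have e1 : (if i = p ∧ j = v then 1 else 0) = 0 := by
            apply if_neg; rintro ⟨hi, -⟩; exact hpv (hi.symm.trans hjp.2)
          have e2 : (if j = p ∧ i = v then 1 else 0) = 1 := if_pos hjp
          rw [e1, e2, hjp.1, hjp.2, h0, h1]
        · rw [if_neg hip, if_neg hjp, add_zero, add_zero]
          exact hpair i j hij
    · intro x y hx _
      have : ¬ (x = p ∧ y = v) := by rintro ⟨rfl, -⟩; exact hx rfl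
      simp [this]
    · intro i
      have hout : (∑ j, ((A i j + (if i = p ∧ j = v then 1 else 0) : ℕ) : ℤ)) =
          (∑ j, (A i j : ℤ)) + (if i = p then 1 else 0) := by
        push_cast
        rw [Finset.sum_add_distrib]
        congr 1
        simpa using sum_ind_fst p v i
      have hin : (∑ j, ((A j i + (if j = p ∧ i = v then 1 else 0) : ℕ) : ℤ)) =
          (∑ j, (A j i : ℤ)) + (if i = v then 1 else 0) := by
        push_cast
        rw [Finset.sum_add_distrib]
        congr 1
        simpa using sum_ind_snd p v i
      simp only [imbalance, hout, hin]
      ring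
  · -- remove the arc v → p
    have h1' : A v p = 1 := by
      have := hpair v p (Ne.symm hpv)
      omega
    refine ⟨fun x y => A x y - (if x = v ∧ y = p then 1 else 0), ⟨?_, ?_⟩, ?_, ?_⟩
    · intro i
      simp [hloop]
    · intro i j hij
      have := hpair i j hij
      by_cases hip : i = v ∧ j = p <;> by_cases hjp : j = v ∧ i = p <;>
        simp [hip, hjp] <;> omega
    · intro x y _ hy
      have : ¬ (x = v ∧ y = p) := by rintro ⟨-, rfl⟩; exact hy rfl
      simp [this]
    · intro i
      have hcast : ∀ x y, ((A x y - (if x = v ∧ y = p then 1 else 0) : ℕ) : ℤ) =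
          (A x y : ℤ) - (if x = v ∧ y = p then 1 else 0) := by
        intro x y
        by_cases hxy : x = v ∧ y = p
        · obtain ⟨rfl, rfl⟩ := hxy
          simp [h1']
        · simp [hxy]
      have hout : (∑ j, ((A i j - (if i = v ∧ j = p then 1 else 0) : ℕ) : ℤ)) =
          (∑ j, (A i j : ℤ)) - (if i = v then 1 else 0) := by
        simp only [hcast]
        rw [Finset.sum_sub_distrib]
        congr 1
        simpa using sum_ind_fst v p i
      have hin : (∑ j, ((A j i - (if j = v ∧ i = p then 1 else 0) : ℕ) : ℤ)) =
          (∑ j, (A j i : ℤ)) - (if i = p then 1 else 0) := by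
        simp only [hcast]
        rw [Finset.sum_sub_distrib]
        congr 1
        simpa using sum_ind_snd v p i
      simp only [imbalance, hout, hin]
      ring

-- §4 chain transfer
lemma chain_of_agree {α : Type*} {R R' : α → α → Prop} :
    ∀ {l : List α} {v : α}, List.Chain R v l →
      (∀ u w, u ∈ v :: l → w ∈ v :: l → R u w → R' u w) → List.Chain R' v l := by
  intro l
  induction l with
  | nil => intro v _ _; exact List.Chain.nil
  | cons w l' ih =>
    intro v hchain hag
    rw [List.Chain, List.chain_cons] at hchain ⊢
    refine ⟨hag v w (by simp) (by simp) hchain.1, ih hchain.2 ?_⟩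
    intro u x hu hx hr
    exact hag u x (by simp at hu ⊢; tauto) (by simp at hx ⊢; tauto) hr

-- §4' push along a walk
lemma pushWalk {n : ℕ} : ∀ (m : ℕ) (l : List (Fin n)) (A : Fin n → Fin n → ℕ),
    l.length ≤ m → IsRDigraph n 1 A → ∀ p : Fin n,
    List.Chain (fun u w => u ≠ w ∧ A u w = 0) p l →
    ∃ B, IsRDigraph n 1 B ∧ ∀ i, imbalance B i =
      imbalance A i + (if i = p then 1 else 0) -
        (if i = (p :: l).getLast (List.cons_ne_nil p l) then 1 else 0) := by
  intro m
  induction m with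
  | zero =>
    intro l A hlen hA p _
    have : l = [] := List.length_eq_zero_iff.mp (Nat.le_zero.mp hlen)
    subst this
    refine ⟨A, hA, fun i => ?_⟩
    rw [List.getLast_singleton]
    ring
  | succ m ih =>
    intro l A hlen hA p hchain
    cases l with
    | nil =>
      refine ⟨A, hA, fun i => ?_⟩
      rw [List.getLast_singleton]
      ring
    | cons v l' =>
      rw [List.Chain, List.chain_cons] at hchain
      obtain ⟨⟨hne, h0⟩, hchain'⟩ := hchain
      by_cases hp : p ∈ v :: l'
      · obtain ⟨s, t, hst⟩ := List.append_of_mem hp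
        have hsuffix : (p :: t) <:+ (p :: v :: l') := ⟨p :: s, by simp [hst]⟩
        have hc2 : List.Chain' (fun u w => u ≠ w ∧ A u w = 0) (p :: v :: l') :=
          List.chain_cons.mpr ⟨⟨hne, h0⟩, hchain'⟩
        have hct : List.Chain (fun u w => u ≠ w ∧ A u w = 0) p t :=
          hc2.suffix hsuffix
        have hlen' : t.length ≤ m := by
          have : (v :: l').length = s.length + (p :: t).length := by rw [hst]; simp
          simp at hlen this
          omega
        obtain ⟨B, hB, himb⟩ := ih t A hlen' hA p hct
        refine ⟨B, hB, fun i => ?_⟩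
        have hlast : (p :: v :: l').getLast (List.cons_ne_nil _ _) =
            (p :: t).getLast (List.cons_ne_nil _ _) := by
          have : p :: v :: l' = (p :: s) ++ (p :: t) := by simp [hst]
          rw [List.getLast_congr _ (by simp) this, List.getLast_append_of_right_ne_nil (p :: s) (p :: t) (List.cons_ne_nil _ _)]
        rw [hlast]
        exact himb i
      · obtain ⟨B', hB', hagree, himb'⟩ := push hA hne h0
        have hchainB' : List.Chain (fun u w => u ≠ w ∧ B' u w = 0) v l' := by
          apply chain_of_agree hchain'
          intro u w hu hw ⟨huw, h0'⟩
          exact ⟨huw, by rw [hagree u w (fun h => hp (h ▸ hu)) (fun h => hp (h ▸ hw))]; exact h0'⟩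
        have hlen' : l'.length ≤ m := by simp at hlen; omega
        obtain ⟨B, hB, himb⟩ := ih l' B' hlen' hB' v hchainB'
        refine ⟨B, hB, fun i => ?_⟩
        have hlast : (p :: v :: l').getLast (List.cons_ne_nil _ _) =
            (v :: l').getLast (List.cons_ne_nil _ _) := List.getLast_cons _
        rw [hlast, himb i, himb' i]
        ring

-- §5 psum of the modified sequence
lemma psum_modify {n : ℕ} (f : Fin n → ℤ) (p q : Fin n) (k : ℕ) :
    psum (fun i => f i + (if i = q then 1 else 0) - (if i = p then 1 else 0)) k =
      psum f k + (if (q : ℕ) < k then 1 else 0) - (if (p : ℕ) < k then 1 else 0) := by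
  unfold psum
  rw [Finset.sum_sub_distrib, Finset.sum_add_distrib]
  congr 1
  · congr 1
    rw [Finset.sum_ite_eq' _ q (fun _ => (1 : ℤ))]
    simp
  · rw [Finset.sum_ite_eq' _ p (fun _ => (1 : ℤ))]
    simp

-- §5' the realization lemma
lemma realize {n : ℕ} : ∀ (m : ℕ) (f : Fin n → ℤ), Antitone f → Feasible n f →
    (∑ i, (f i).toNat) ≤ m → ∃ A, IsRDigraph n 1 A ∧ ∀ i, imbalance A i = f i := by
  classical
  intro m
  induction m with
  | zero =>
    intro f _ hfeas hm
    have hzero : ∀ i, f i = 0 := by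
      have hnp : ∀ i, (f i).toNat = 0 := by
        intro i
        have h1 : (f i).toNat ≤ ∑ j, (f j).toNat :=
          Finset.single_le_sum (f := fun j => (f j).toNat)
            (fun j _ => Nat.zero_le _) (Finset.mem_univ i)
        omega
      have hle : ∀ i ∈ Finset.univ, f i ≤ 0 := fun i _ => by have := hnp i; omega
      have hsum : ∑ i, f i = 0 := by rw [← psum_univ]; exact hfeas.1
      intro i
      exact (Finset.sum_eq_zero_iff_of_nonpos hle).mp hsum i (Finset.mem_univ i)
    refine ⟨fun _ _ => 0, ⟨fun _ => rfl, fun _ _ _ => by norm_num⟩, fun i => ?_⟩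
    simp [imbalance, hzero]
  | succ m ih =>
    intro f hanti hfeas hm
    have hsum : ∑ i, f i = 0 := by rw [← psum_univ]; exact hfeas.1
    by_cases hz : ∀ i, f i = 0
    · refine ⟨fun _ _ => 0, ⟨fun _ => rfl, fun _ _ _ => by norm_num⟩, fun i => ?_⟩
      simp [imbalance, hz]
    · push_neg at hz
      obtain ⟨i0, hi0⟩ := hz
      -- there is a positive and a negative entry
      have hPne : (Finset.univ.filter (fun i => 0 < f i)).Nonempty := by
        by_contra hP
        rw [Finset.not_nonempty_iff_eq_empty, Finset.filter_eq_empty_iff] at hP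
        have hle : ∀ i ∈ Finset.univ, f i ≤ 0 := fun i hi => by
          have := hP hi; omega
        exact hi0 ((Finset.sum_eq_zero_iff_of_nonpos hle).mp hsum i0 (Finset.mem_univ i0))
      have hQne : (Finset.univ.filter (fun i => f i < 0)).Nonempty := by
        by_contra hQ
        rw [Finset.not_nonempty_iff_eq_empty, Finset.filter_eq_empty_iff] at hQ
        have hle : ∀ i ∈ Finset.univ, 0 ≤ f i := fun i hi => by
          have := hQ hi; omega
        exact hi0 ((Finset.sum_eq_zero_iff_of_nonneg hle).mp hsum i0 (Finset.mem_univ i0))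
      set p := (Finset.univ.filter (fun i => 0 < f i)).max' hPne with hp
      set q := (Finset.univ.filter (fun i => f i < 0)).min' hQne with hq
      have hfp : 0 < f p := by
        have := (Finset.univ.filter (fun i => 0 < f i)).max'_mem hPne
        rw [Finset.mem_filter] at this; exact this.2
      have hfq : f q < 0 := by
        have := (Finset.univ.filter (fun i => f i < 0)).min'_mem hQne
        rw [Finset.mem_filter] at this; exact this.2
      have hgt : ∀ i, p < i → f i ≤ 0 := by
        intro i hi
        by_contra hfi
        have : i ≤ p := Finset.le_max' _ i (by simp; omega)
        exact absurd hi (not_lt.mpr this)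
      have hlt : ∀ i, i < q → 0 ≤ f i := by
        intro i hi
        by_contra hfi
        have : q ≤ i := Finset.min'_le _ i (by simp; omega)
        exact absurd hi (not_lt.mpr this)
      have hpq : p < q := by
        by_contra h
        push_neg at h
        have := hanti h
        omega
      have hpq' : p ≠ q := ne_of_lt hpq
      have hqp' : q ≠ p := ne_of_gt hpq
      set f' : Fin n → ℤ :=
        fun i => f i + (if i = q then 1 else 0) - (if i = p then 1 else 0) with hf'
      have hf'p : f' p = f p - 1 := by simp [hf', hpq']
      have hf'q : f' q = f q + 1 := by simp [hf', hqp']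
      have hf'other : ∀ i, i ≠ p → i ≠ q → f' i = f i := by
        intro i h1 h2; simp [hf', h1, h2]
      -- f' is antitone
      have hanti' : Antitone f' := by
        intro i j hij
        rcases eq_or_lt_of_le hij with rfl | hlt'
        · exact le_refl _
        · by_cases hjq : j = q
          · subst hjq
            by_cases hip : i = p
            · subst hip
              rw [hf'p, hf'q]; omega
            · rw [hf'q, hf'other i hip (ne_of_lt hlt')]
              have := hlt i hlt'
              omega
          · by_cases hjp : j = p
            · subst hjp
              have hiq : i ≠ q := ne_of_lt (lt_trans hlt' hpq)
              have hipne : i ≠ p := ne_of_lt hlt'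
              rw [hf'p, hf'other i hipne hiq]
              have := hanti (le_of_lt hlt')
              omega
            · rw [hf'other j hjp hjq]
              by_cases hiq : i = q
              · subst hiq
                rw [hf'q]
                have := hanti (le_of_lt hlt')
                omega
              · by_cases hip : i = p
                · subst hip
                  rw [hf'p]
                  have := hgt j hlt'
                  omega
                · rw [hf'other i hip hiq]
                  exact hanti (le_of_lt hlt')
      -- f' is feasible
      have hfeas' : Feasible n f' := by
        constructor
        · rw [hf', psum_modify, hfeas.1, if_pos q.2, if_pos p.2]
          ring
        · intro k hk1 hkn
          have hmain := hfeas.2 k hk1 hkn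
          rw [hf', psum_modify]
          by_cases hqk : (q : ℕ) < k
          · have hpk : (p : ℕ) < k := lt_of_le_of_lt (le_of_lt hpq) hqk
            rw [if_pos hqk, if_pos hpk]; omega
          · rw [if_neg hqk]
            by_cases hpk : (p : ℕ) < k
            · rw [if_pos hpk]; omega
            · rw [if_neg hpk]; omega
      -- the measure decreases
      have hmes : (∑ i, (f' i).toNat) < ∑ i, (f i).toNat := by
        apply Finset.sum_lt_sum
        · intro i _
          by_cases hip : i = p
          · subst hip; rw [hf'p]; omega
          · by_cases hiq : i = q
            · subst hiq; rw [hf'q]; omega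
            · rw [hf'other i hip hiq]
        · exact ⟨p, Finset.mem_univ p, by rw [hf'p]; omega⟩
      obtain ⟨A', hA', himb'⟩ := ih f' hanti' hfeas' (by omega)
      -- residual reachability from p to q
      set R : Fin n → Fin n → Prop := fun u w => u ≠ w ∧ A' u w = 0 with hR
      have hreach : Relation.ReflTransGen R p q := by
        by_contra hnr
        set S : Finset (Fin n) :=
          Finset.univ.filter (fun v => Relation.ReflTransGen R p v) with hS
        have hpS : p ∈ S := by
          simp only [hS, Finset.mem_filter, Finset.mem_univ, true_and]
          exact Relation.ReflTransGen.refl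
        have hqS : q ∉ S := by simp [hS]; exact hnr
        have hedge : ∀ u ∈ S, ∀ w ∈ Sᶜ, A' u w = 1 ∧ A' w u = 0 := by
          intro u hu w hw
          rw [Finset.mem_compl] at hw
          have huw : u ≠ w := by rintro rfl; exact hw hu
          have hnR : ¬ R u w := by
            intro hRuw
            apply hw
            simp only [hS, Finset.mem_filter, Finset.mem_univ, true_and]
            have hu' : Relation.ReflTransGen R p u := by
              simp only [hS, Finset.mem_filter] at hu; exact hu.2
            exact hu'.tail hRuw
          have h1 : A' u w ≠ 0 := fun h => hnR ⟨huw, h⟩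
          have h2 := hA'.2 u w huw
          omega
        have hcut : ∑ v ∈ S, imbalance A' v = (S.card : ℤ) * (Sᶜ.card : ℤ) := by
          rw [imbalance_sum_cut]
          have : ∀ u ∈ S, ∑ v ∈ Sᶜ, ((A' u v : ℤ) - A' v u) = (Sᶜ.card : ℤ) := by
            intro u hu
            rw [Finset.sum_congr rfl (fun v hv => ?_), Finset.sum_const, nsmul_eq_mul, mul_one]
            obtain ⟨e1, e2⟩ := hedge u hu v hv
            rw [e1, e2]
            norm_num
          rw [Finset.sum_congr rfl this, Finset.sum_const, nsmul_eq_mul]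
        have hSf' : ∑ v ∈ S, f' v = (∑ v ∈ S, f v) - 1 := by
          rw [hf']
          rw [Finset.sum_sub_distrib, Finset.sum_add_distrib]
          rw [Finset.sum_ite_eq' S q (fun _ => (1 : ℤ)), Finset.sum_ite_eq' S p (fun _ => (1 : ℤ))]
          rw [if_neg hqS, if_pos hpS]
          ring
        have hcard1 : 1 ≤ S.card := Finset.card_pos.mpr ⟨p, hpS⟩
        have hcardn : S.card < n := by
          have : Sᶜ.Nonempty := ⟨q, Finset.mem_compl.mpr hqS⟩
          have h1 := Finset.card_pos.mpr this
          have h2 : Sᶜ.card = n - S.card := by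
            rw [Finset.card_compl, Fintype.card_fin]
          have h3 : S.card ≤ n := by simpa using Finset.card_le_card (Finset.subset_univ S)
          omega
        have hsub := sum_subset_le_psum f hanti S
        have hbound := hfeas.2 S.card hcard1 hcardn
        have himbS : ∑ v ∈ S, imbalance A' v = ∑ v ∈ S, f' v :=
          Finset.sum_congr rfl (fun v _ => himb' v)
        have hcompl : (Sᶜ.card : ℤ) = (n : ℤ) - S.card := by
          rw [Finset.card_compl, Fintype.card_fin]
          have h3 : S.card ≤ n := by simpa using Finset.card_le_card (Finset.subset_univ S)
          push_cast [Nat.cast_sub h3]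
          ring
        rw [himbS, hSf', hcompl] at hcut
        linarith
      -- push a unit of imbalance from p to q
      obtain ⟨l, hchain, hlast⟩ := List.exists_isChain_cons_of_relationReflTransGen hreach
      obtain ⟨B, hB, himbB⟩ := pushWalk l.length l A' le_rfl hA' p hchain
      refine ⟨B, hB, fun i => ?_⟩
      rw [himbB i, himb' i, hlast, hf']
      by_cases hip : i = p <;> by_cases hiq : i = q <;> simp [hip, hiq, hpq', hqp'] <;> ring

-- §6 forward direction
lemma imbalance_feasible {n : ℕ} (f : Fin n → ℤ) (hanti : Antitone f)
    (A : Fin n → Fin n → ℕ) (h : IsImbalanceSeq n 1 A f) : Feasible n f := by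
  obtain ⟨hA, σ, hb⟩ := h
  have hsum0 : ∑ v, imbalance A v = 0 := by
    have := imbalance_sum_cut A Finset.univ
    rw [Finset.compl_univ] at this
    simpa using this
  constructor
  · rw [psum_univ]
    calc ∑ i, f i = ∑ i, imbalance A (σ i) := Finset.sum_congr rfl (fun i _ => hb i)
      _ = ∑ v, imbalance A v := Equiv.sum_comp σ (imbalance A)
      _ = 0 := hsum0
  · intro k hk1 hkn
    set F := Finset.univ.filter (fun i : Fin n => (i : ℕ) < k) with hF
    set S := F.image σ with hSdef
    have hcardF : F.card = k := card_filter_lt (le_of_lt hkn)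
    have hcardS : S.card = k := by
      rw [hSdef, Finset.card_image_of_injective _ σ.injective, hcardF]
    have h1 : psum f k = ∑ v ∈ S, imbalance A v := by
      rw [psum, hSdef, Finset.sum_image (fun a _ b _ h => σ.injective h)]
      exact Finset.sum_congr rfl (fun i _ => hb i)
    rw [h1, imbalance_sum_cut]
    have h2 : ∀ u ∈ S, ∑ v ∈ Sᶜ, ((A u v : ℤ) - A v u) ≤ (Sᶜ.card : ℤ) := by
      intro u hu
      calc ∑ v ∈ Sᶜ, ((A u v : ℤ) - A v u) ≤ ∑ v ∈ Sᶜ, 1 := by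
            apply Finset.sum_le_sum
            intro v hv
            have huv : u ≠ v := by
              rintro rfl
              exact (Finset.mem_compl.mp hv) hu
            have := hA.2 u v huv
            omega
        _ = (Sᶜ.card : ℤ) := by simp
    calc ∑ u ∈ S, ∑ v ∈ Sᶜ, ((A u v : ℤ) - A v u)
        ≤ ∑ u ∈ S, (Sᶜ.card : ℤ) := Finset.sum_le_sum h2
      _ = (S.card : ℤ) * (Sᶜ.card : ℤ) := by rw [Finset.sum_const, nsmul_eq_mul]
      _ = (k : ℤ) * ((n : ℤ) - k) := by
          rw [hcardS, Finset.card_compl, Fintype.card_fin, hcardS]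
          push_cast [Nat.cast_sub (le_of_lt hkn)]
          ring


/-- A non-increasing sequence is the imbalance sequence of a simple digraph
(an r-digraph with r = 1) iff it is feasible. -/
theorem stmt16 (n : ℕ) (f : Fin n → ℤ) (hanti : Antitone f) :
    (∃ A : Fin n → Fin n → ℕ, IsImbalanceSeq n 1 A f) ↔ Feasible n f := by
  constructor
  · rintro ⟨A, hA⟩
    exact imbalance_feasible f hanti A hA
  · intro hfeas
    obtain ⟨A, hA, himb⟩ := realize (∑ i, (f i).toNat) f hanti hfeas le_rfl
    exact ⟨A, hA, Equiv.refl _, fun i => by simp [himb i]⟩
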